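/- For every smooth ϱ : ℝ² → ℝ and every i ∈ {1,2}, Σ ε^{i i₂} ε^{j₁ j₂} ε^{k₁ k₂} (∂_{k₁}ϱ)(∂_{i₂}∂_{j₁}∂_{k₂}ϱ)(∂_{j₂}ϱ) = − Σ ε^{i i₂} ε^{j₁ j₂} ε^{k₁ k₂} (∂_{i₂}∂_{j₁}∂_{k₁}ϱ)(∂_{j₂}ϱ)(∂_{k₂}ϱ), both sums running over all i₂, j₁, j₂, k₁, k₂ ∈ {1,2}. Equivalently, φ(Γ₉^{2D}) = −φ(Γ₁₁^{2D}): the Kontsevich graphs encoded [0,2;2,3;1,2] and [0,1;1,3;1,2] are synonyms with coefficient −1. -/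
import Mathlib


/-- The partial derivative `∂/∂xⁱ` of a function on `ℝ² ≃ (Fin 2 → ℝ)`. -/
noncomputable def pd (i : Fin 2) (f : (Fin 2 → ℝ) → ℝ) : (Fin 2 → ℝ) → ℝ :=
  fun x => fderiv ℝ f x (Pi.single i 1)

/-- The two-index Levi-Civita symbol: `ε⁰¹ = 1 = −ε¹⁰`, `ε⁰⁰ = ε¹¹ = 0`
(indices `1, 2` of the paper are `0, 1` here). -/
def eps (i j : Fin 2) : ℝ := (j : ℝ) - (i : ℝ)

/-- For every smooth `ϱ : ℝ² → ℝ` and every free index `i`,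
`Σ ε^{i i₂} ε^{j₁ j₂} ε^{k₁ k₂} (∂_{k₁}ϱ)(∂_{i₂}∂_{j₁}∂_{k₂}ϱ)(∂_{j₂}ϱ)
 = − Σ ε^{i i₂} ε^{j₁ j₂} ε^{k₁ k₂} (∂_{i₂}∂_{j₁}∂_{k₁}ϱ)(∂_{j₂}ϱ)(∂_{k₂}ϱ)`,
i.e. `φ(Γ₉^{2D}) = −φ(Γ₁₁^{2D})`: the Kontsevich graphs `[0,2;2,3;1,2]` and
`[0,1;1,3;1,2]` are synonyms with coefficient `−1`. -/
theorem synonym_gamma9_eq_neg_gamma11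
    (ϱ : (Fin 2 → ℝ) → ℝ) (hϱ : ContDiff ℝ (⊤ : ℕ∞) ϱ) :
    ∀ i : Fin 2, ∀ x : Fin 2 → ℝ,
      (∑ i₂ : Fin 2, ∑ j₁ : Fin 2, ∑ j₂ : Fin 2, ∑ k₁ : Fin 2, ∑ k₂ : Fin 2,
        eps i i₂ * eps j₁ j₂ * eps k₁ k₂ *
          (pd k₁ ϱ x * pd i₂ (pd j₁ (pd k₂ ϱ)) x * pd j₂ ϱ x)) =
      -∑ i₂ : Fin 2, ∑ j₁ : Fin 2, ∑ j₂ : Fin 2, ∑ k₁ : Fin 2, ∑ k₂ : Fin 2,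
        eps i i₂ * eps j₁ j₂ * eps k₁ k₂ *
          (pd i₂ (pd j₁ (pd k₁ ϱ)) x * pd j₂ ϱ x * pd k₂ ϱ x) := by
  intro i x
  fin_cases i <;> simp only [Fin.sum_univ_two, eps] <;> norm_num <;> ring
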